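/- Let d ∈ ℕ, d ≥ 1, and let f : ℝ → ℝ be d times continuously differentiable. Suppose there exist positive constants η₀ and δ such that for every x ∈ ℝ there exists an index i with 0 ≤ i ≤ d such that inf_{y ∈ [x, x+η₀]} |f^{(i)}(y)| ≥ δ. Then condition (A1)(i) holds: there exist constants K > 0 and η* > 0 such that for every η ∈ (0, η*) and every x ∈ ℝ one has sup_{y ∈ [x, x+η)} |f(y)| ≥ η^K and sup_{y ∈ (x−η, x]} |f(y)| ≥ η^K. -/

import Mathlib

open Set

lemma keyA : ∀ (n : ℕ) (g : ℝ → ℝ), ContDiff ℝ n g → ∀ (a h ε : ℝ), 0 < h →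
    (∀ y ∈ Icc a (a + n*h), |g y| ≤ ε) →
    ∃ ξ ∈ Icc a (a + n*h), |iteratedDeriv n g ξ| * h^n ≤ 2^n * ε := by
  intro n
  induction n with
  | zero =>
    intro g hg a h ε hh hb
    refine ⟨a, by simp, ?_⟩
    simpa using hb a (by simp)
  | succ n ih =>
    intro g hg a h ε hh hb
    set G : ℝ → ℝ := fun x => g (x + h) - g x with hGdef
    have hgsh : ContDiff ℝ (n+1) (fun x : ℝ => g (x + h)) :=
      hg.comp (contDiff_id.add contDiff_const)
    have hG : ContDiff ℝ n G :=
      (hgsh.sub hg).of_le (by exact_mod_cast Nat.cast_le.mpr (Nat.le_succ n))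
    have hGb : ∀ y ∈ Icc a (a + n*h), |G y| ≤ 2 * ε := by
      intro y hy
      obtain ⟨hy1, hy2⟩ := hy
      have h1 : |g (y + h)| ≤ ε := by
        refine hb _ ⟨by linarith, ?_⟩
        push_cast; nlinarith
      have h2 : |g y| ≤ ε := by
        refine hb _ ⟨hy1, ?_⟩
        push_cast; nlinarith [hh.le]
      calc |G y| ≤ |g (y+h)| + |g y| := abs_sub _ _
        _ ≤ 2 * ε := by linarith
    obtain ⟨ξ, hξ, hle⟩ := ih G hG a h (2*ε) hh hGb
    -- identify iteratedDeriv n G ξ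
    have hid : iteratedDeriv n G ξ = iteratedDeriv n g (ξ + h) - iteratedDeriv n g ξ := by
      have hsub : iteratedDeriv n G ξ
          = iteratedDeriv n (fun x : ℝ => g (x + h)) ξ - iteratedDeriv n g ξ := by
        simp only [← iteratedDerivWithin_univ]
        exact iteratedDerivWithin_sub (Set.mem_univ ξ) uniqueDiffOn_univ
          (hgsh.contDiffOn.of_le (by exact_mod_cast Nat.cast_le.mpr (Nat.le_succ n)) ξ (Set.mem_univ ξ))
          (hg.contDiffOn.of_le (by exact_mod_cast Nat.cast_le.mpr (Nat.le_succ n)) ξ (Set.mem_univ ξ))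
      rw [hsub, iteratedDeriv_comp_add_const n g h]
    -- MVT on iteratedDeriv n g over [ξ, ξ+h]
    have hdiff : Differentiable ℝ (iteratedDeriv n g) :=
      hg.differentiable_iteratedDeriv n (by exact_mod_cast Nat.lt_succ_self n)
    obtain ⟨c, hc, hceq⟩ := exists_deriv_eq_slope (iteratedDeriv n g)
      (by linarith : ξ < ξ + h) (hdiff.continuous.continuousOn)
      (hdiff.differentiableOn)
    have hcderiv : deriv (iteratedDeriv n g) c = iteratedDeriv (n+1) g c :=
      by rw [iteratedDeriv_succ]
    have heq : iteratedDeriv n g (ξ + h) - iteratedDeriv n g ξ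
        = h * iteratedDeriv (n+1) g c := by
      rw [← hcderiv, hceq, add_sub_cancel_left]; field_simp [hh.ne']
    refine ⟨c, ⟨by cases hξ with | intro h1 h2 => cases hc with | intro h3 h4 => linarith,
      ?_⟩, ?_⟩
    · obtain ⟨h1, h2⟩ := hξ; obtain ⟨h3, h4⟩ := hc
      push_cast; push_cast at h2; nlinarith
    · have : |iteratedDeriv (n+1) g c| * h^(n+1) = |iteratedDeriv n G ξ| * h^n := by
        rw [hid, heq, abs_mul, abs_of_pos hh, pow_succ]; ring
      rw [this]
      calc |iteratedDeriv n G ξ| * h^n ≤ 2^n * (2*ε) := hle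
        _ = 2^(n+1) * ε := by ring

lemma keyB (d : ℕ) (hd : 1 ≤ d) (f : ℝ → ℝ) (hf : ContDiff ℝ d f)
    (η₀ δ : ℝ) (hδ : 0 < δ)
    (hinf : ∀ x : ℝ, ∃ i ≤ d, ∀ y ∈ Icc x (x + η₀), δ ≤ |iteratedDeriv i f y|)
    (η : ℝ) (hη0 : 0 < η) (hη1 : η ≤ 1) (hηη₀ : η < η₀) (hηδ : η < δ / (8*d)^d)
    (a : ℝ) : ∃ y ∈ Icc a (a + η/4), η^(d+1) ≤ |f y| := by
  by_contra hcon
  push_neg at hcon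
  obtain ⟨i, hid, hi⟩ := hinf a
  have hdpos : (0:ℝ) < (d:ℝ) := by exact_mod_cast hd
  set h : ℝ := η / (4*d) with hhdef
  have hh : 0 < h := by positivity
  have hih : (i:ℝ) * h ≤ η/4 := by
    have hi' : (i:ℝ) ≤ d := by exact_mod_cast hid
    have hdh : (d:ℝ) * h = η/4 := by rw [hhdef]; field_simp
    nlinarith [hh.le]
  obtain ⟨ξ, hξ, hle⟩ := keyA i f (hf.of_le (by exact_mod_cast hid)) a h (η^(d+1)) hh
    (fun y hy => le_of_lt (hcon y ⟨hy.1, by nlinarith [hy.2]⟩))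
  have hξ0 : δ ≤ |iteratedDeriv i f ξ| := by
    refine hi ξ ⟨hξ.1, ?_⟩
    nlinarith [hξ.2]
  have hkey : δ * h^i ≤ 2^i * η^(d+1) := by
    calc δ * h^i ≤ |iteratedDeriv i f ξ| * h^i :=
          mul_le_mul_of_nonneg_right hξ0 (by positivity)
      _ ≤ 2^i * η^(d+1) := hle
  have hhpow : h^i = η^i / (4*d)^i := by rw [hhdef, div_pow]
  have h2 : δ * η^i ≤ (8*d)^i * η^(d+1) := by
    rw [hhpow] at hkey
    have h4d : (0:ℝ) < (4*d)^i := by positivity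
    calc δ * η^i = δ * (η^i / (4*d)^i) * (4*d)^i := by field_simp
      _ ≤ 2^i * η^(d+1) * (4*d)^i := by
          apply mul_le_mul_of_nonneg_right hkey h4d.le
      _ = (8*d)^i * η^(d+1) := by rw [show ((8:ℝ)*d)^i = 2^i * (4*(d:ℝ))^i from by rw [← mul_pow]; ring_nf]; ring
  have h3 : δ ≤ (8*d)^i * η^(d+1-i) := by
    have hsplit : η^(d+1) = η^(d+1-i) * η^i := by
      rw [← pow_add]; congr 1; omega
    rw [hsplit, ← mul_assoc] at h2
    exact le_of_mul_le_mul_right h2 (by positivity)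
  have h4 : ((8:ℝ)*d)^i ≤ (8*d)^d :=
    pow_le_pow_right₀ (by have h1 : (1:ℝ) ≤ (d:ℝ) := Nat.one_le_cast.mpr hd; linarith) hid
  have h5 : η^(d+1-i) ≤ η := pow_le_of_le_one hη0.le hη1 (by omega)
  have h6 : δ ≤ (8*d)^d * η := by
    calc δ ≤ (8*d)^i * η^(d+1-i) := h3
      _ ≤ (8*d)^d * η := by
          apply mul_le_mul h4 h5 (by positivity) (by positivity)
  rw [lt_div_iff₀ (by positivity)] at hηδ
  linarith

/-- if `f` is `d` times continuously differentiable (`d ≥ 1`) and there exist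
`η₀, δ > 0` such that for every `x` some derivative `f⁽ⁱ⁾` (`0 ≤ i ≤ d`) satisfies
`|f⁽ⁱ⁾| ≥ δ` on all of `[x, x+η₀]`, then condition (A1)(i) holds. -/
theorem stmt_2 (d : ℕ) (hd : 1 ≤ d) (f : ℝ → ℝ) (hf : ContDiff ℝ d f)
    (η₀ δ : ℝ) (hη₀ : 0 < η₀) (hδ : 0 < δ)
    (hinf : ∀ x : ℝ, ∃ i ≤ d, ∀ y ∈ Icc x (x + η₀), δ ≤ |iteratedDeriv i f y|) :
    ∃ K > (0:ℝ), ∃ ηs > (0:ℝ), ∀ η ∈ Ioo (0:ℝ) ηs, ∀ x : ℝ,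
      (((η ^ K : ℝ) : EReal) ≤ ⨆ y ∈ Ico x (x + η), ((|f y| : ℝ) : EReal)) ∧
      (((η ^ K : ℝ) : EReal) ≤ ⨆ y ∈ Ioc (x - η) x, ((|f y| : ℝ) : EReal)) := by
  refine ⟨(d:ℝ)+1, by positivity, min η₀ (min 1 (δ / (8*d)^d)), ?_, ?_⟩
  · have hdpos : (0:ℝ) < (d:ℝ) := by exact_mod_cast hd
    positivity
  intro η hη x
  obtain ⟨hη0, hηs⟩ := hη
  have hη1 : η ≤ 1 := le_of_lt (lt_of_lt_of_le hηs (le_trans (min_le_right _ _) (min_le_left _ _)))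
  have hηη₀ : η < η₀ := lt_of_lt_of_le hηs (min_le_left _ _)
  have hηδ : η < δ / (8*d)^d :=
    lt_of_lt_of_le hηs (le_trans (min_le_right _ _) (min_le_right _ _))
  have hrpow : η ^ ((d:ℝ)+1) = η ^ (d+1) := by
    rw [show ((d:ℝ)+1) = ((d+1:ℕ):ℝ) by push_cast; ring, Real.rpow_natCast]
  constructor
  · obtain ⟨y, hy, hfy⟩ := keyB d hd f hf η₀ δ hδ hinf η hη0 hη1 hηη₀ hηδ x
    have hy' : y ∈ Ico x (x + η) := ⟨hy.1, by have := hy.2; linarith⟩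
    refine le_trans ?_ (le_iSup₂ (f := fun y (_ : y ∈ Ico x (x+η)) => ((|f y| : ℝ) : EReal)) y hy')
    rw [hrpow]
    exact_mod_cast EReal.coe_le_coe_iff.mpr hfy
  · obtain ⟨y, hy, hfy⟩ := keyB d hd f hf η₀ δ hδ hinf η hη0 hη1 hηη₀ hηδ (x - η/2)
    have hy' : y ∈ Ioc (x - η) x := ⟨by have := hy.1; linarith, by have := hy.2; linarith⟩
    refine le_trans ?_ (le_iSup₂ (f := fun y (_ : y ∈ Ioc (x-η) x) => ((|f y| : ℝ) : EReal)) y hy')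
    rw [hrpow]
    exact_mod_cast EReal.coe_le_coe_iff.mpr hfy
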